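/- Let A ∈ SL(4,ℂ) satisfy A⁵ = I and F∘A = c·F for some c ∈ ℂ. Suppose there exists α = (a₀,a₁,a₂,b₀,b₁,b₂) ∈ ℂ⁶ such that (aᵢ,bᵢ) ≠ (0,0) for each i ∈ {0,1,2} (the semistability condition), and there exists d ∈ ℂ with P_α∘A = d·P_α, where P_α = a₀x₀³ + a₁x₁³ + a₂x₂³ + b₀x₀²x₃ + b₁x₁²x₃ + b₂x₂²x₃. Then A = I. (Consequently, the stabilizer of any semistable point of the exceptional divisor of the Kirwan blowup at the 3A₂ cubic contains no element of order 5, so its order is not divisible by 5.) -/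

import Mathlib

open MvPolynomial

/-- The defining cubic form of the 3A₂ cubic surface: F = x₀x₁x₂ + x₃³. -/
noncomputable def F3A2 : MvPolynomial (Fin 4) ℂ :=
  X 0 * X 1 * X 2 + X 3 ^ 3

/-- The substitution action: (P∘A)(x) = P(A·x), i.e. xⱼ ↦ Σₖ Aⱼₖ·xₖ. -/
noncomputable def actM (A : Matrix (Fin 4) (Fin 4) ℂ) (P : MvPolynomial (Fin 4) ℂ) :
    MvPolynomial (Fin 4) ℂ :=
  MvPolynomial.aeval (fun j => ∑ k : Fin 4, MvPolynomial.C (A j k) * MvPolynomial.X k) P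

/-- The cubic form P_α = a₀x₀³ + a₁x₁³ + a₂x₂³ + b₀x₀²x₃ + b₁x₁²x₃ + b₂x₂²x₃ giving a
point of the exceptional ℙ⁵ of the Kirwan blowup at the 3A₂ cubic. -/
noncomputable def excPoint (a b : Fin 3 → ℂ) : MvPolynomial (Fin 4) ℂ :=
  C (a 0) * X 0 ^ 3 + C (a 1) * X 1 ^ 3 + C (a 2) * X 2 ^ 3 +
  C (b 0) * X 0 ^ 2 * X 3 + C (b 1) * X 1 ^ 2 * X 3 + C (b 2) * X 2 ^ 2 * X 3

/-- Any self-map of `Fin 3` whose fifth iterate is the identity is the identity. -/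
private lemma aux_perm3 : ∀ s : Fin 3 → Fin 3,
    (∀ i, s (s (s (s (s i)))) = i) → ∀ i, s i = i := by decide

/-- Number-theoretic endgame: a fifth root of unity `d` such that three numbers, each equal
to `d²` or `d³`, have product `1`, must be `1`. -/
private lemma aux_dfive (d x y z : ℂ) (hd5 : d ^ 5 = 1)
    (hx : x = d ^ 2 ∨ x = d ^ 3) (hy : y = d ^ 2 ∨ y = d ^ 3) (hz : z = d ^ 2 ∨ z = d ^ 3)
    (hprod : x * y * z = 1) : d = 1 := by
  have cas2 : d ^ 2 = 1 → d = 1 := fun h2 => by linear_combination hd5 - (d^3 + d) * h2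
  have cas3 : d ^ 3 = 1 → d = 1 := fun h3 => by
    have h2 : d ^ 2 = 1 := by linear_combination hd5 - d ^ 2 * h3
    linear_combination h3 - d * h2
  have cas4 : d ^ 4 = 1 → d = 1 := fun h4 => by linear_combination hd5 - d * h4
  rcases hx with hx | hx <;> rcases hy with hy | hy <;> rcases hz with hz | hz <;>
    rw [hx, hy, hz] at hprod
  · exact by linear_combination hprod - d * hd5
  · exact cas2 (by linear_combination hprod - d ^ 2 * hd5)
  · exact cas2 (by linear_combination hprod - d ^ 2 * hd5)
  · exact cas3 (by linear_combination hprod - d ^ 3 * hd5)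
  · exact cas2 (by linear_combination hprod - d ^ 2 * hd5)
  · exact cas3 (by linear_combination hprod - d ^ 3 * hd5)
  · exact cas3 (by linear_combination hprod - d ^ 3 * hd5)
  · exact cas4 (by linear_combination hprod - d ^ 4 * hd5)

/-- No stabilizer of a semistable point of the exceptional divisor of the Kirwan
blowup at the 3A₂ cubic contains an element of order 5: if A ∈ SL(4,ℂ) satisfies
A⁵ = I, F∘A = c·F for some c, and fixes (up to scalar) a semistable point P_α of the
exceptional ℙ⁵ (i.e. (aᵢ,bᵢ) ≠ (0,0) for each i), then A = I. -/
theorem no_order_five_stabilizers (A : Matrix.SpecialLinearGroup (Fin 4) ℂ)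
    (h5 : A ^ 5 = 1)
    (hF : ∃ c : ℂ, actM (A : Matrix (Fin 4) (Fin 4) ℂ) F3A2 = c • F3A2)
    (hfix : ∃ a b : Fin 3 → ℂ,
      (∀ i : Fin 3, ¬(a i = 0 ∧ b i = 0)) ∧
      (∃ d : ℂ, actM (A : Matrix (Fin 4) (Fin 4) ℂ) (excPoint a b) = d • excPoint a b)) :
    A = 1 := by
  obtain ⟨c, hc⟩ := hF
  obtain ⟨a, b, hsemi, d, hd⟩ := hfix
  set B : Matrix (Fin 4) (Fin 4) ℂ := (A : Matrix (Fin 4) (Fin 4) ℂ) with hBdef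
  set N : Matrix (Fin 4) (Fin 4) ℂ :=
    ((A⁻¹ : Matrix.SpecialLinearGroup (Fin 4) ℂ) : Matrix (Fin 4) (Fin 4) ℂ) with hNdef
  have hBN : ∀ w : Fin 4 → ℂ, B.mulVec (N.mulVec w) = w := by
    intro w
    rw [Matrix.mulVec_mulVec, hBdef, hNdef, ← Matrix.SpecialLinearGroup.coe_mul,
      mul_inv_cancel, Matrix.SpecialLinearGroup.coe_one, Matrix.one_mulVec]
  have hNB : ∀ w : Fin 4 → ℂ, N.mulVec (B.mulVec w) = w := by
    intro w
    rw [Matrix.mulVec_mulVec, hBdef, hNdef, ← Matrix.SpecialLinearGroup.coe_mul,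
      inv_mul_cancel, Matrix.SpecialLinearGroup.coe_one, Matrix.one_mulVec]
  have hB5 : B ^ 5 = 1 := by
    rw [hBdef, ← Matrix.SpecialLinearGroup.coe_pow, h5, Matrix.SpecialLinearGroup.coe_one]
  -- the functional identity for F
  have hfun : ∀ x : Fin 4 → ℂ,
      (B.mulVec x 0) * (B.mulVec x 1) * (B.mulVec x 2) + (B.mulVec x 3) ^ 3
        = c * (x 0 * x 1 * x 2 + x 3 ^ 3) := by
    intro x
    have h := congrArg (MvPolynomial.eval x) hc
    simp [actM, F3A2, smul_eval, Matrix.mulVec, dotProduct] at h ⊢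
    linear_combination h
  -- the functional identity for P
  have hpfun : ∀ x : Fin 4 → ℂ,
      a 0 * (B.mulVec x 0) ^ 3 + a 1 * (B.mulVec x 1) ^ 3 + a 2 * (B.mulVec x 2) ^ 3
        + b 0 * (B.mulVec x 0) ^ 2 * (B.mulVec x 3)
        + b 1 * (B.mulVec x 1) ^ 2 * (B.mulVec x 3)
        + b 2 * (B.mulVec x 2) ^ 2 * (B.mulVec x 3)
      = d * (a 0 * x 0 ^ 3 + a 1 * x 1 ^ 3 + a 2 * x 2 ^ 3
          + b 0 * x 0 ^ 2 * x 3 + b 1 * x 1 ^ 2 * x 3 + b 2 * x 2 ^ 2 * x 3) := by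
    intro x
    have h := congrArg (MvPolynomial.eval x) hd
    simp [actM, excPoint, smul_eval, Matrix.mulVec, dotProduct] at h ⊢
    linear_combination h
  -- the directional-derivative identity
  have hg1 : ∀ p v : Fin 4 → ℂ,
      (B.mulVec p 1)*(B.mulVec p 2)*(B.mulVec v 0) + (B.mulVec p 0)*(B.mulVec p 2)*(B.mulVec v 1)
      + (B.mulVec p 0)*(B.mulVec p 1)*(B.mulVec v 2) + 3*(B.mulVec p 3)^2*(B.mulVec v 3)
      = c * (p 1*p 2*v 0 + p 0*p 2*v 1 + p 0*p 1*v 2 + 3*(p 3)^2*v 3) := by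
    intro p v
    have hlin : ∀ (t : ℂ) (j : Fin 4), B.mulVec (fun k => p k + t * v k) j
        = B.mulVec p j + t * B.mulVec v j := by
      intro t j
      simp [Matrix.mulVec, dotProduct, Fin.sum_univ_four]; ring
    have E : ∀ t : ℂ, (B.mulVec p 0 + t * B.mulVec v 0) * (B.mulVec p 1 + t * B.mulVec v 1) *
        (B.mulVec p 2 + t * B.mulVec v 2) + (B.mulVec p 3 + t * B.mulVec v 3)^3
        = c * ((p 0 + t * v 0) * (p 1 + t * v 1) * (p 2 + t * v 2) + (p 3 + t * v 3)^3) := by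
      intro t
      have h := hfun (fun k => p k + t * v k)
      simpa only [hlin] using h
    have E1 := E 1; have E2 := E (-1); have E3 := E 2; have E4 := E (-2)
    linear_combination (2/3)*E1 - (2/3)*E2 - (1/12)*E3 + (1/12)*E4
  -- column structure: products within the first three columns vanish
  have colfact : ∀ i : Fin 4, i ≠ 3 →
      B 3 i = 0 ∧ B 0 i * B 1 i = 0 ∧ B 0 i * B 2 i = 0 ∧ B 1 i * B 2 i = 0 := by
    intro i hi
    have g : ∀ j : Fin 4,
        B 1 i * B 2 i * (Pi.single j 1 : Fin 4 → ℂ) 0 + B 0 i * B 2 i * (Pi.single j 1 : Fin 4 → ℂ) 1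
        + B 0 i * B 1 i * (Pi.single j 1 : Fin 4 → ℂ) 2 + 3 * (B 3 i)^2 * (Pi.single j 1 : Fin 4 → ℂ) 3 = 0 := by
      intro j
      have h := hg1 (Pi.single i 1) (N.mulVec (Pi.single j 1))
      rw [hBN] at h
      simp only [Matrix.mulVec_single, mul_one] at h
      fin_cases i
      · simpa using h
      · simpa using h
      · simpa using h
      · exact absurd rfl hi
    have g0 := g 0; have g1 := g 1; have g2 := g 2; have g3 := g 3
    simp [Pi.single_apply] at g0 g1 g2 g3
    exact ⟨g3, mul_eq_zero.mpr g2, mul_eq_zero.mpr g1, mul_eq_zero.mpr g0⟩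
  have hcolne : ∀ i : Fin 4, ¬ (∀ j : Fin 4, B j i = 0) := by
    intro i hzero
    have h1 : B.mulVec (Pi.single i 1) = 0 := by
      funext m; simp [Matrix.mulVec_single, hzero]
    have h2 := hNB (Pi.single i 1)
    rw [h1] at h2
    simp at h2
    have := congrFun h2 i
    simp at this
  have hne3 : ∀ i : Fin 3, i.castSucc ≠ (3 : Fin 4) := by
    intro i h
    have := congrArg Fin.val h
    simp [Fin.castSucc, Fin.castAdd, Fin.castLE] at this
    omega
  set s : Fin 3 → Fin 3 := fun i =>
    if B 0 i.castSucc = 0 then (if B 1 i.castSucc = 0 then 2 else 1) else 0 with hs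
  have CP : ∀ i : Fin 3, B (s i).castSucc i.castSucc ≠ 0
      ∧ ∀ j : Fin 3, j ≠ s i → B j.castSucc i.castSucc = 0 := by
    intro i
    obtain ⟨h3, h01, h02, h12⟩ := colfact i.castSucc (hne3 i)
    simp only [hs]
    split_ifs with h0 h1
    · have h2 : B 2 i.castSucc ≠ 0 := by
        intro h2
        apply hcolne i.castSucc
        intro j
        fin_cases j
        · exact h0
        · exact h1
        · exact h2
        · exact h3
      refine ⟨h2, ?_⟩
      intro j hj; fin_cases j
      · exact h0
      · exact h1
      · exact absurd rfl hj
    · refine ⟨h1, ?_⟩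
      have h2 : B 2 i.castSucc = 0 := (mul_eq_zero.mp h12).resolve_left h1
      intro j hj; fin_cases j
      · exact h0
      · exact absurd rfl hj
      · exact h2
    · refine ⟨h0, ?_⟩
      have hb1 : B 1 i.castSucc = 0 := (mul_eq_zero.mp h01).resolve_left h0
      have hb2 : B 2 i.castSucc = 0 := (mul_eq_zero.mp h02).resolve_left h0
      intro j hj; fin_cases j
      · exact absurd rfl hj
      · exact hb1
      · exact hb2
  set lam : Fin 3 → ℂ := fun i => B (s i).castSucc i.castSucc with hlam
  have hBsingle : ∀ i : Fin 3, B.mulVec (Pi.single i.castSucc 1)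
      = lam i • (Pi.single (s i).castSucc 1 : Fin 4 → ℂ) := by
    intro i
    funext m
    simp only [Matrix.mulVec_single, mul_one, Pi.smul_apply, smul_eq_mul]
    by_cases hm : m = (s i).castSucc
    · subst hm; simp [hlam]
    · rw [Pi.single_apply, if_neg hm, mul_zero]
      induction m using Fin.lastCases with
      | last => simpa using (colfact i.castSucc (hne3 i)).1
      | cast j => simpa using (CP i).2 j (by
          intro h; exact hm (by rw [h]))
  have hB5' : B * (B * (B * (B * B))) = 1 := by
    rw [← hB5, pow_succ', pow_succ', pow_succ', pow_succ', pow_one]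
  have hpow : ∀ i : Fin 3, Pi.single i.castSucc (1:ℂ)
      = (lam i * lam (s i) * lam (s (s i)) * lam (s (s (s i))) * lam (s (s (s (s i))))) •
        (Pi.single (s (s (s (s (s i))))).castSucc 1 : Fin 4 → ℂ) := by
    intro i
    have e1 := hBsingle i
    have e2 : B.mulVec (B.mulVec (Pi.single i.castSucc 1)) =
        (lam i * lam (s i)) • (Pi.single (s (s i)).castSucc 1 : Fin 4 → ℂ) := by
      rw [e1, Matrix.mulVec_smul, hBsingle, smul_smul]
    have e3 : B.mulVec (B.mulVec (B.mulVec (Pi.single i.castSucc 1))) =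
        (lam i * lam (s i) * lam (s (s i))) •
          (Pi.single (s (s (s i))).castSucc 1 : Fin 4 → ℂ) := by
      rw [e2, Matrix.mulVec_smul, hBsingle, smul_smul]
    have e4 : B.mulVec (B.mulVec (B.mulVec (B.mulVec (Pi.single i.castSucc 1)))) =
        (lam i * lam (s i) * lam (s (s i)) * lam (s (s (s i)))) •
          (Pi.single (s (s (s (s i)))).castSucc 1 : Fin 4 → ℂ) := by
      rw [e3, Matrix.mulVec_smul, hBsingle, smul_smul]
    have e5 : B.mulVec (B.mulVec (B.mulVec (B.mulVec (B.mulVec (Pi.single i.castSucc 1))))) =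
        (lam i * lam (s i) * lam (s (s i)) * lam (s (s (s i))) * lam (s (s (s (s i))))) •
          (Pi.single (s (s (s (s (s i))))).castSucc 1 : Fin 4 → ℂ) := by
      rw [e4, Matrix.mulVec_smul, hBsingle, smul_smul]
    have h0 := congrArg (fun M : Matrix (Fin 4) (Fin 4) ℂ =>
      M.mulVec (Pi.single i.castSucc (1:ℂ))) hB5'
    simp only [Matrix.one_mulVec] at h0
    rw [← Matrix.mulVec_mulVec, ← Matrix.mulVec_mulVec, ← Matrix.mulVec_mulVec,
      ← Matrix.mulVec_mulVec, e5] at h0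
    exact h0.symm
  have hlamne : ∀ i : Fin 3, lam i ≠ 0 := fun i => (CP i).1
  have hs5 : ∀ i : Fin 3, s (s (s (s (s i)))) = i := by
    intro i
    by_contra hne
    have h := congrFun (hpow i) (s (s (s (s (s i))))).castSucc
    rw [Pi.single_apply, if_neg (fun hcast => hne (Fin.castSucc_injective _ hcast)),
      Pi.smul_apply, Pi.single_apply, if_pos rfl, smul_eq_mul, mul_one] at h
    exact (mul_ne_zero (mul_ne_zero (mul_ne_zero (mul_ne_zero (hlamne i) (hlamne _)) (hlamne _))
      (hlamne _)) (hlamne _)) h.symm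
  have hsid : ∀ i : Fin 3, s i = i := aux_perm3 s hs5
  -- off-diagonal entries of the first three columns vanish
  have hoff : ∀ i : Fin 3, ∀ j : Fin 4, j ≠ i.castSucc → B j i.castSucc = 0 := by
    intro i j hj
    induction j using Fin.lastCases with
    | last => exact (colfact i.castSucc (hne3 i)).1
    | cast j' => exact (CP i).2 j' (by rw [hsid i]; intro h; exact hj (by rw [h]))
  have hdne : ∀ i : Fin 3, B i.castSucc i.castSucc ≠ 0 := by
    intro i
    have := (CP i).1
    rwa [hsid i] at this
  -- concrete versions
  have c00 : (Fin.castSucc (0 : Fin 3)) = (0 : Fin 4) := rfl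
  have c11 : (Fin.castSucc (1 : Fin 3)) = (1 : Fin 4) := rfl
  have c22 : (Fin.castSucc (2 : Fin 3)) = (2 : Fin 4) := rfl
  have z10 : B 1 0 = 0 := by have := hoff 0 1 (by decide); rwa [c00] at this
  have z20 : B 2 0 = 0 := by have := hoff 0 2 (by decide); rwa [c00] at this
  have z30 : B 3 0 = 0 := by have := hoff 0 3 (by decide); rwa [c00] at this
  have z01 : B 0 1 = 0 := by have := hoff 1 0 (by decide); rwa [c11] at this
  have z21 : B 2 1 = 0 := by have := hoff 1 2 (by decide); rwa [c11] at this
  have z31 : B 3 1 = 0 := by have := hoff 1 3 (by decide); rwa [c11] at this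
  have z02 : B 0 2 = 0 := by have := hoff 2 0 (by decide); rwa [c22] at this
  have z12 : B 1 2 = 0 := by have := hoff 2 1 (by decide); rwa [c22] at this
  have z32 : B 3 2 = 0 := by have := hoff 2 3 (by decide); rwa [c22] at this
  have ne0 : B 0 0 ≠ 0 := by have := hdne 0; rwa [c00] at this
  have ne1 : B 1 1 ≠ 0 := by have := hdne 1; rwa [c11] at this
  have ne2 : B 2 2 ≠ 0 := by have := hdne 2; rwa [c22] at this
  -- kill the last column's off-diagonal entries
  have w2 : B 2 3 = 0 := by
    have h := hg1 ![1,1,0,0] ![0,0,0,1]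
    norm_num [Matrix.mulVec, dotProduct, Fin.sum_univ_four,
      z10, z20, z30, z01, z21, z31] at h
    simp at h
    tauto
  have w1 : B 1 3 = 0 := by
    have h := hg1 ![1,0,1,0] ![0,0,0,1]
    norm_num [Matrix.mulVec, dotProduct, Fin.sum_univ_four,
      z10, z20, z30, z02, z12, z32] at h
    simp at h
    tauto
  have w0 : B 0 3 = 0 := by
    have h := hg1 ![0,1,1,0] ![0,0,0,1]
    norm_num [Matrix.mulVec, dotProduct, Fin.sum_univ_four,
      z01, z21, z31, z02, z12, z32] at h
    simp at h
    tauto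
  -- B is diagonal
  have hBdiag : B = Matrix.diagonal ![B 0 0, B 1 1, B 2 2, B 3 3] := by
    ext m k
    fin_cases m <;> fin_cases k <;>
      simp [Matrix.diagonal, z10, z20, z30, z01, z21, z31, z02, z12, z32, w0, w1, w2]
  set l0 := B 0 0
  set l1 := B 1 1
  set l2 := B 2 2
  set l3 := B 3 3
  -- fifth roots of unity
  have hfifth : ∀ m : Fin 4, (![l0, l1, l2, l3] m) ^ 5 = 1 := by
    intro m
    have h := hB5
    rw [hBdiag, Matrix.diagonal_pow] at h
    have := congrFun (congrFun h m) m
    simpa [Matrix.diagonal_apply_eq, Matrix.one_apply_eq] using this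
  have h05 : l0 ^ 5 = 1 := by simpa using hfifth 0
  have h15 : l1 ^ 5 = 1 := by simpa using hfifth 1
  have h25 : l2 ^ 5 = 1 := by simpa using hfifth 2
  have h35 : l3 ^ 5 = 1 := by simpa using hfifth 3
  -- determinant
  have hdet : l0 * l1 * l2 * l3 = 1 := by
    have h := A.property
    rw [show A.val = B from rfl, hBdiag, Matrix.det_diagonal, Fin.prod_univ_four] at h
    simpa using h
  -- c equations
  have hf1 : l0 * l1 * l2 = c := by
    have h := hfun ![1, 1, 1, 0]
    rw [hBdiag] at h
    simp [Matrix.mulVec_diagonal] at h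
    linear_combination h
  have hf2 : l3 ^ 3 = c := by
    have h := hfun ![0, 0, 0, 1]
    rw [hBdiag] at h
    simp [Matrix.mulVec_diagonal] at h
    linear_combination h
  have hl3 : l3 = 1 := by
    have h4 : l3 ^ 4 = 1 := by linear_combination l3 * hf2 - l3 * hf1 + hdet
    linear_combination h35 - l3 * h4
  -- product of first three eigenvalues is 1
  have hprod : l0 * l1 * l2 = 1 := by
    have hc1 : c = 1 := by linear_combination hf2.symm + (l3^2 + l3 + 1) * hl3
    rw [hf1, hc1]
  -- d equations
  have hD : ∀ (i : Fin 4) (li : ℂ) (ai bi : ℂ), i ≠ 3 → li = ![l0,l1,l2,l3] i →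
      True := fun _ _ _ _ _ _ => trivial
  have hp0 : a 0 * l0 ^ 3 = d * a 0 ∧ b 0 * l0 ^ 2 = d * b 0 := by
    have h1 := hpfun ![1, 0, 0, 0]
    have h2 := hpfun ![1, 0, 0, 1]
    rw [hBdiag] at h1 h2
    simp [Matrix.mulVec_diagonal] at h1 h2
    constructor
    · linear_combination h1
    · rw [hl3] at h2; linear_combination h2 - h1
  have hp1 : a 1 * l1 ^ 3 = d * a 1 ∧ b 1 * l1 ^ 2 = d * b 1 := by
    have h1 := hpfun ![0, 1, 0, 0]
    have h2 := hpfun ![0, 1, 0, 1]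
    rw [hBdiag] at h1 h2
    simp [Matrix.mulVec_diagonal] at h1 h2
    constructor
    · linear_combination h1
    · rw [hl3] at h2; linear_combination h2 - h1
  have hp2 : a 2 * l2 ^ 3 = d * a 2 ∧ b 2 * l2 ^ 2 = d * b 2 := by
    have h1 := hpfun ![0, 0, 1, 0]
    have h2 := hpfun ![0, 0, 1, 1]
    rw [hBdiag] at h1 h2
    simp [Matrix.mulVec_diagonal] at h1 h2
    constructor
    · linear_combination h1
    · rw [hl3] at h2; linear_combination h2 - h1
  -- each eigenvalue is d² or d³, and d⁵ = 1
  have key : ∀ (li : ℂ) (i : Fin 3), li ^ 5 = 1 →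
      (a i * li ^ 3 = d * a i) → (b i * li ^ 2 = d * b i) →
      (li = d ^ 2 ∨ li = d ^ 3) ∧ d ^ 5 = 1 := by
    intro li i hli5 hai hbi
    rcases not_and_or.mp (hsemi i) with ha | hb
    · have h3 : li ^ 3 = d := mul_left_cancel₀ ha
        (show a i * li ^ 3 = a i * d by linear_combination hai)
      exact ⟨Or.inl (by linear_combination (li^3 + d) * h3 - li * hli5),
        by rw [← h3, show (li^3)^5 = (li^5)^3 by ring, hli5, one_pow]⟩
    · have h2 : li ^ 2 = d := mul_left_cancel₀ hb
        (show b i * li ^ 2 = b i * d by linear_combination hbi)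
      exact ⟨Or.inr (by linear_combination (li^4 + li^2*d + d^2) * h2 - li * hli5),
        by rw [← h2, show (li^2)^5 = (li^5)^2 by ring, hli5, one_pow]⟩
  obtain ⟨k0, hd5⟩ := key l0 0 h05 hp0.1 hp0.2
  obtain ⟨k1, -⟩ := key l1 1 h15 hp1.1 hp1.2
  obtain ⟨k2, -⟩ := key l2 2 h25 hp2.1 hp2.2
  have hd1 : d = 1 := aux_dfive d l0 l1 l2 hd5 k0 k1 k2 hprod
  have hl0 : l0 = 1 := by rcases k0 with h | h <;> rw [h, hd1] <;> ring
  have hl1 : l1 = 1 := by rcases k1 with h | h <;> rw [h, hd1] <;> ring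
  have hl2 : l2 = 1 := by rcases k2 with h | h <;> rw [h, hd1] <;> ring
  have hBone : B = 1 := by
    rw [hBdiag, hl0, hl1, hl2, hl3,
      show (![(1:ℂ), 1, 1, 1] : Fin 4 → ℂ) = fun _ => 1 from by
        funext m; fin_cases m <;> rfl,
      Matrix.diagonal_one]
  have hco : (A : Matrix (Fin 4) (Fin 4) ℂ)
      = ((1 : Matrix.SpecialLinearGroup (Fin 4) ℂ) : Matrix (Fin 4) (Fin 4) ℂ) := by
    rw [Matrix.SpecialLinearGroup.coe_one]; exact hBone
  exact Subtype.coe_injective hco
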